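/- arXiv:1407.5232 — 4 statements merged into one kernel-verified Lean document; each statement's English description precedes it below -/
import Mathlib

section
/- For every p ≥ 0, ρ > 0 and positive integer n, ∑_{i ≤ ρn} i^{2p} ≤ (ρ+1)^{2p+1} ∑_{i=1}^n i^{2p}, where the left sum is over positive integers i with i ≤ ρn. -/
open MeasureTheory

/-- For `p ≥ 0`, `ρ > 0` and a positive integer `n`,
`∑_{i ≤ ρn} i^(2p) ≤ (ρ+1)^(2p+1) ∑_{i=1}^n i^(2p)`. -/
theorem sum_rpow_scaled_range (p ρ : ℝ) (hp : 0 ≤ p) (hρ : 0 < ρ) (n : ℕ) (hn : 1 ≤ n) :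
    ∑ i ∈ Finset.Icc 1 ⌊ρ * (n : ℝ)⌋₊, (i : ℝ) ^ (2 * p) ≤
      (ρ + 1) ^ (2 * p + 1) * ∑ i ∈ Finset.Icc 1 n, (i : ℝ) ^ (2 * p) := by
  set q : ℝ := 2 * p + 1 with hqdef
  have hq1 : (1:ℝ) ≤ q := by simp [hqdef]; linarith
  have hq0 : (0:ℝ) < q := by linarith
  set m := ⌊ρ * (n : ℝ)⌋₊ with hm
  have hmono : ∀ a b : ℕ, MonotoneOn (fun x : ℝ => x ^ (2*p)) (Set.Icc (a:ℝ) (b:ℝ)) := by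
    intro a b x hx y hy hxy
    exact Real.rpow_le_rpow (le_trans (Nat.cast_nonneg a) hx.1) hxy (by linarith)
  -- Upper bound for LHS
  have h1 : ∑ i ∈ Finset.Icc 1 m, (i : ℝ) ^ (2 * p) ≤ ((m:ℝ)+1) ^ q / q := by
    have hle : 1 ≤ m + 1 := by omega
    have := MonotoneOn.sum_le_integral_Ico (f := fun x : ℝ => x ^ (2*p)) hle (hmono 1 (m+1))
    rw [Finset.Ico_add_one_right_eq_Icc 1 m] at this
    refine this.trans ?_
    rw [integral_rpow (Or.inl (by linarith))]
    push_cast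
    have h1q : (1:ℝ) ^ (2*p+1) = 1 := Real.one_rpow _
    rw [h1q]
    have : (0:ℝ) ≤ ((m:ℝ)+1) ^ (2*p+1) := Real.rpow_nonneg (by positivity) _
    gcongr
    · linarith
  -- Lower bound for RHS sum
  have h2 : (n:ℝ) ^ q / q ≤ ∑ i ∈ Finset.Icc 1 n, (i : ℝ) ^ (2 * p) := by
    have hle : 0 ≤ n := Nat.zero_le n
    have := MonotoneOn.integral_le_sum_Ico (f := fun x : ℝ => x ^ (2*p)) hle (hmono 0 n)
    rw [integral_rpow (Or.inl (by linarith))] at this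
    simp only [Nat.cast_zero] at this
    rw [Real.zero_rpow (by linarith : (2*p+1) ≠ 0), sub_zero] at this
    refine le_trans (le_of_eq rfl) (this.trans ?_)
    rw [Finset.sum_Ico_eq_sum_range]
    rw [← Finset.Ico_add_one_right_eq_Icc 1 n, Finset.sum_Ico_eq_sum_range]
    simp [add_comm]
  -- m + 1 ≤ (ρ+1) n
  have hm1 : (m:ℝ) + 1 ≤ (ρ+1) * n := by
    have := Nat.floor_le (by positivity : (0:ℝ) ≤ ρ * n)
    have hn1 : (1:ℝ) ≤ n := by exact_mod_cast hn
    nlinarith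
  have h3 : ((m:ℝ)+1) ^ q ≤ (ρ+1) ^ q * (n:ℝ) ^ q := by
    rw [← Real.mul_rpow (by positivity) (Nat.cast_nonneg n)]
    exact Real.rpow_le_rpow (by positivity) hm1 (le_of_lt hq0)
  calc ∑ i ∈ Finset.Icc 1 m, (i : ℝ) ^ (2 * p)
      ≤ ((m:ℝ)+1) ^ q / q := h1
    _ ≤ (ρ+1) ^ q * ((n:ℝ) ^ q / q) := by
        rw [mul_div_assoc']
        gcongr
    _ ≤ (ρ+1) ^ q * ∑ i ∈ Finset.Icc 1 n, (i : ℝ) ^ (2 * p) := by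
        exact mul_le_mul_of_nonneg_left h2 (Real.rpow_nonneg (by positivity) _)
end

section
/- For p ≥ 0 and any τ ≥ 2^{1+1/(2p+1)}, for all integers m ≥ τ one has ∑_{i=1}^{⌊m/τ⌋} i^{2p} ≤ (1/2) ∑_{i=1}^m i^{2p}. -/
open Finset Real

/-- For `p ≥ 0` and `τ ≥ 2^(1+1/(2p+1))`, for all integers `m ≥ τ`:
`∑_{i=1}^{⌊m/τ⌋} i^(2p) ≤ (1/2) ∑_{i=1}^m i^(2p)`. -/
theorem sum_rpow_floor_div_le_half (p τ : ℝ) (hp : 0 ≤ p)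
    (hτ : (2 : ℝ) ^ (1 + 1 / (2 * p + 1)) ≤ τ) (m : ℕ) (hm : τ ≤ (m : ℝ)) :
    ∑ i ∈ Finset.Icc 1 ⌊(m : ℝ) / τ⌋₊, (i : ℝ) ^ (2 * p) ≤
      (1 / 2) * ∑ i ∈ Finset.Icc 1 m, (i : ℝ) ^ (2 * p) := by
  set q : ℝ := 2 * p with hqdef
  have hq : 0 ≤ q := by positivity
  have hq1 : (0:ℝ) < q + 1 := by linarith
  have hexp : (0:ℝ) < 1 / (q + 1) := div_pos one_pos hq1
  have h2τ : (2:ℝ) < τ := by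
    calc (2:ℝ) = 2 ^ (1:ℝ) := (Real.rpow_one 2).symm
    _ < 2 ^ (1 + 1/(q+1)) := Real.rpow_lt_rpow_of_exponent_lt one_lt_two (by linarith)
    _ ≤ τ := hτ
  have hτ0 : (0:ℝ) < τ := by linarith
  have hm2 : (2:ℝ) < (m:ℝ) := lt_of_lt_of_le h2τ hm
  have hm3 : 3 ≤ m := by
    have : 2 < m := by exact_mod_cast hm2
    omega
  set k := ⌊(m : ℝ) / τ⌋₊ with hkdef
  have hk_le : (k:ℝ) ≤ (m:ℝ)/τ := Nat.floor_le (by positivity)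
  -- Step A: left sum ≤ k^(q+1)
  have hA : ∑ i ∈ Icc 1 k, (i:ℝ)^q ≤ (k:ℝ)^(q+1) := by
    rcases Nat.eq_zero_or_pos k with hk0 | hk0
    · simp [hk0, Real.zero_rpow hq1.ne']
    · calc ∑ i ∈ Icc 1 k, (i:ℝ)^q
          ≤ ∑ _i ∈ Icc 1 k, (k:ℝ)^q := by
            refine Finset.sum_le_sum fun i hi => ?_
            exact Real.rpow_le_rpow (Nat.cast_nonneg i)
              (by exact_mod_cast (Finset.mem_Icc.mp hi).2) hq
        _ = (k:ℝ) * (k:ℝ)^q := by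
            rw [Finset.sum_const, Nat.card_Icc, nsmul_eq_mul]
            norm_num
        _ = (k:ℝ)^(q+1) := by
            rw [Real.rpow_add (by exact_mod_cast hk0), Real.rpow_one]; ring
  -- Step C: k^(q+1) ≤ m^(q+1)/2^(q+2)
  have hbase : (0:ℝ) < 2 ^ (1 + 1/(q+1)) := by positivity
  have hC : (k:ℝ)^(q+1) ≤ (m:ℝ)^(q+1) / 2^(q+2) := by
    have h1 : (k:ℝ)^(q+1) ≤ ((m:ℝ)/τ)^(q+1) :=
      Real.rpow_le_rpow (Nat.cast_nonneg k) hk_le hq1.le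
    have h2 : ((m:ℝ)/τ)^(q+1) ≤ ((m:ℝ)/2^(1+1/(q+1)))^(q+1) := by
      refine Real.rpow_le_rpow (by positivity) ?_ hq1.le
      exact div_le_div_of_nonneg_left (by positivity) hbase hτ
    have h3 : ((m:ℝ)/2^(1+1/(q+1)))^(q+1) = (m:ℝ)^(q+1) / 2^(q+2) := by
      rw [Real.div_rpow (Nat.cast_nonneg m) hbase.le, ← Real.rpow_mul (by norm_num)]
      congr 1
      field_simp
      ring_nf
    linarith
  -- Step B: m^(q+1)/2^(q+1) ≤ right sum
  have hB : (m:ℝ)^(q+1) / 2^(q+1) ≤ ∑ i ∈ Icc 1 m, (i:ℝ)^q := by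
    have hsub : Icc (m - m/2) m ⊆ Icc 1 m := by
      intro i hi
      rw [Finset.mem_Icc] at hi ⊢
      omega
    have hhalf : (m:ℝ)/2 ≤ ((m - m/2 : ℕ):ℝ) := by
      have h1 : ((m/2 : ℕ):ℝ) ≤ (m:ℝ)/2 := Nat.cast_div_le
      rw [Nat.cast_sub (Nat.div_le_self m 2)]
      linarith
    have hterm : ∀ i ∈ Icc (m - m/2) m, ((m:ℝ)/2)^q ≤ (i:ℝ)^q := by
      intro i hi
      refine Real.rpow_le_rpow (by positivity) ?_ hq
      calc (m:ℝ)/2 ≤ ((m - m/2 : ℕ):ℝ) := hhalf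
        _ ≤ (i:ℝ) := by exact_mod_cast (Finset.mem_Icc.mp hi).1
    have hcard : (Icc (m - m/2) m).card = m/2 + 1 := by
      rw [Nat.card_Icc]; omega
    have hsum1 : ((m/2 + 1 : ℕ):ℝ) * ((m:ℝ)/2)^q ≤ ∑ i ∈ Icc (m - m/2) m, (i:ℝ)^q := by
      have := Finset.card_nsmul_le_sum (Icc (m - m/2) m) (fun i => (i:ℝ)^q)
        (((m:ℝ)/2)^q) hterm
      rwa [hcard, nsmul_eq_mul] at this
    have hsum2 : ∑ i ∈ Icc (m - m/2) m, (i:ℝ)^q ≤ ∑ i ∈ Icc 1 m, (i:ℝ)^q :=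
      Finset.sum_le_sum_of_subset_of_nonneg hsub
        (fun i _ _ => Real.rpow_nonneg (Nat.cast_nonneg i) q)
    have hge : (m:ℝ)/2 ≤ ((m/2 + 1 : ℕ):ℝ) := by
      have : m ≤ 2 * (m/2 + 1) := by omega
      have h := (Nat.cast_le (α := ℝ)).mpr this
      push_cast at h ⊢
      linarith
    have hpos : (0:ℝ) < (m:ℝ)/2 := by linarith
    have hfin : (m:ℝ)^(q+1) / 2^(q+1) = ((m:ℝ)/2) * ((m:ℝ)/2)^q := by
      rw [← Real.div_rpow (Nat.cast_nonneg m) (by norm_num : (0:ℝ) ≤ 2),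
        Real.rpow_add hpos, Real.rpow_one]
      ring
    have hmono : ((m:ℝ)/2) * ((m:ℝ)/2)^q ≤ ((m/2 + 1 : ℕ):ℝ) * ((m:ℝ)/2)^q :=
      mul_le_mul_of_nonneg_right hge (Real.rpow_nonneg hpos.le q)
    linarith
  have hsplit : (m:ℝ)^(q+1) / 2^(q+2) = (1/2) * ((m:ℝ)^(q+1) / 2^(q+1)) := by
    rw [show q + 2 = (q+1) + 1 by ring, Real.rpow_add (by norm_num : (0:ℝ) < 2),
      Real.rpow_one]
    ring
  calc ∑ i ∈ Icc 1 k, (i:ℝ)^q ≤ (k:ℝ)^(q+1) := hA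
    _ ≤ (m:ℝ)^(q+1) / 2^(q+2) := hC
    _ = (1/2) * ((m:ℝ)^(q+1) / 2^(q+1)) := hsplit
    _ ≤ (1/2) * ∑ i ∈ Icc 1 m, (i:ℝ)^q := by linarith
end

section
/- For p ≥ 0, τ₀ ≥ 1, and all integers l ≥ τ₀, l·⌊l/τ₀⌋^{2p} ≥ (2τ₀)^{-2p} ∑_{i=⌊l/τ₀⌋+1}^{l} i^{2p}. -/
/-- For `p ≥ 0`, `τ₀ ≥ 1` and all integers `l ≥ τ₀`:
`l·⌊l/τ₀⌋^(2p) ≥ (2τ₀)^(-2p) ∑_{i=⌊l/τ₀⌋+1}^{l} i^(2p)`. -/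
theorem floor_pow_tail_sum (p τ₀ : ℝ) (hp : 0 ≤ p) (hτ₀ : 1 ≤ τ₀)
    (l : ℕ) (hl : τ₀ ≤ (l : ℝ)) :
    (2 * τ₀) ^ (-(2 * p)) * ∑ i ∈ Finset.Icc (⌊(l : ℝ) / τ₀⌋₊ + 1) l, (i : ℝ) ^ (2 * p) ≤
      (l : ℝ) * ((⌊(l : ℝ) / τ₀⌋₊ : ℝ)) ^ (2 * p) := by
  set m := ⌊(l : ℝ) / τ₀⌋₊ with hm
  have hτpos : 0 < τ₀ := lt_of_lt_of_le one_pos hτ₀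
  have hm1 : 1 ≤ m := Nat.le_floor (by rw [le_div_iff₀ hτpos]; simpa using hl)
  have hm1' : (1 : ℝ) ≤ (m : ℝ) := by exact_mod_cast hm1
  have hlub : (l : ℝ) ≤ 2 * τ₀ * m := by
    have h1 : (l : ℝ) / τ₀ < m + 1 := Nat.lt_floor_add_one _
    have h2 : (l : ℝ) < (m + 1) * τ₀ := (div_lt_iff₀ hτpos).1 h1
    nlinarith
  have hbpos : (0 : ℝ) ≤ 2 * τ₀ * m := by positivity
  have hterm : ∀ i ∈ Finset.Icc (m + 1) l, (i : ℝ) ^ (2 * p) ≤ (2 * τ₀ * m) ^ (2 * p) := by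
    intro i hi
    apply Real.rpow_le_rpow (Nat.cast_nonneg i) _ (by positivity)
    exact le_trans (Nat.cast_le.2 (Finset.mem_Icc.1 hi).2) hlub
  have hcard : ((Finset.Icc (m + 1) l).card : ℝ) ≤ (l : ℝ) := by
    rw [Nat.card_Icc]
    have : l + 1 - (m + 1) ≤ l := by omega
    exact_mod_cast this
  have hsum : ∑ i ∈ Finset.Icc (m + 1) l, (i : ℝ) ^ (2 * p)
      ≤ (l : ℝ) * (2 * τ₀ * m) ^ (2 * p) := by
    calc ∑ i ∈ Finset.Icc (m + 1) l, (i : ℝ) ^ (2 * p)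
        ≤ (Finset.Icc (m + 1) l).card • (2 * τ₀ * m) ^ (2 * p) :=
          Finset.sum_le_card_nsmul _ _ _ hterm
      _ = ((Finset.Icc (m + 1) l).card : ℝ) * (2 * τ₀ * m) ^ (2 * p) := by
          simp [nsmul_eq_mul]
      _ ≤ (l : ℝ) * (2 * τ₀ * m) ^ (2 * p) := by
          apply mul_le_mul_of_nonneg_right hcard (Real.rpow_nonneg hbpos _)
  have hsplit : (2 * τ₀ * m : ℝ) ^ (2 * p) = (2 * τ₀) ^ (2 * p) * (m : ℝ) ^ (2 * p) :=
    Real.mul_rpow (by positivity) (by positivity)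
  have h2τpos : (0 : ℝ) < 2 * τ₀ := by positivity
  have hinv : (2 * τ₀) ^ (-(2 * p)) * (2 * τ₀) ^ (2 * p) = 1 := by
    rw [← Real.rpow_add h2τpos]; simp
  calc (2 * τ₀) ^ (-(2 * p)) * ∑ i ∈ Finset.Icc (m + 1) l, (i : ℝ) ^ (2 * p)
      ≤ (2 * τ₀) ^ (-(2 * p)) * ((l : ℝ) * (2 * τ₀ * m) ^ (2 * p)) := by
        apply mul_le_mul_of_nonneg_left hsum (Real.rpow_nonneg (le_of_lt h2τpos) _)
    _ = (2 * τ₀) ^ (-(2 * p)) * (2 * τ₀) ^ (2 * p) * ((l : ℝ) * (m : ℝ) ^ (2 * p)) := by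
        rw [hsplit]; ring
    _ = (l : ℝ) * (m : ℝ) ^ (2 * p) := by rw [hinv, one_mul]
end

section
/- For every γ > 0 and p ≥ 0, ∑_{n=1}^∞ e^{-γn} (∑_{i=1}^n i^{2p}) ≤ 4(8p+4)^{2p} / ((eγ)^{2p+1}(e^{γ/2}-1)). In particular the double series converges. -/
open Real Finset

/-- Key pointwise bound: `x^a ≤ (a/(e b))^a e^{b x}` for `x ≥ 0`, `a, b > 0`. -/
lemma rpow_le_exp_aux {x a b : ℝ} (hx : 0 ≤ x) (ha : 0 < a) (hb : 0 < b) :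
    x ^ a ≤ (a / (Real.exp 1 * b)) ^ a * Real.exp (b * x) := by
  have heb : 0 < Real.exp 1 * b := mul_pos (exp_pos 1) hb
  have key : Real.exp 1 * b * x / a ≤ Real.exp (b * x / a) := by
    have h := Real.add_one_le_exp (b * x / a - 1)
    calc Real.exp 1 * b * x / a = Real.exp 1 * (b * x / a - 1 + 1) := by
          field_simp; ring
    _ ≤ Real.exp 1 * Real.exp (b * x / a - 1) := by
          nlinarith [exp_pos (1 : ℝ)]
    _ = Real.exp (b * x / a) := by rw [← Real.exp_add]; ring_nf
  have hx' : (0:ℝ) ≤ Real.exp 1 * b * x / a := by positivity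
  have h1 : (Real.exp 1 * b * x / a) ^ a ≤ Real.exp (b * x) := by
    calc (Real.exp 1 * b * x / a) ^ a ≤ (Real.exp (b * x / a)) ^ a :=
          Real.rpow_le_rpow hx' key ha.le
    _ = Real.exp (b * x / a * a) := by
          rw [← Real.exp_one_rpow (b * x / a), ← Real.rpow_mul (exp_pos 1).le,
            Real.exp_one_rpow]
    _ = Real.exp (b * x) := by rw [div_mul_cancel₀ _ ha.ne']
  have hxeq : x = (Real.exp 1 * b * x / a) * (a / (Real.exp 1 * b)) := by
    field_simp
  calc x ^ a = (Real.exp 1 * b * x / a) ^ a * (a / (Real.exp 1 * b)) ^ a := by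
        rw [← Real.mul_rpow hx' (by positivity), ← hxeq]
  _ ≤ Real.exp (b * x) * (a / (Real.exp 1 * b)) ^ a :=
        mul_le_mul_of_nonneg_right h1 (by positivity)
  _ = _ := by ring

/-- For every `γ > 0` and `p ≥ 0`, the series `∑_{n≥1} e^(-γn) (∑_{i=1}^n i^(2p))` converges and
is bounded by `4(8p+4)^(2p) / ((eγ)^(2p+1)(e^(γ/2)-1))`.  (The `n = 0` term is zero since the
inner sum is empty.) -/
theorem tsum_exp_mul_sum_rpow_le (γ p : ℝ) (hγ : 0 < γ) (hp : 0 ≤ p) :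
    Summable (fun n : ℕ => Real.exp (-γ * n) * ∑ i ∈ Finset.Icc 1 n, (i : ℝ) ^ (2 * p)) ∧
    ∑' n : ℕ, Real.exp (-γ * n) * ∑ i ∈ Finset.Icc 1 n, (i : ℝ) ^ (2 * p) ≤
      4 * (8 * p + 4) ^ (2 * p) /
        ((Real.exp 1 * γ) ^ (2 * p + 1) * (Real.exp (γ / 2) - 1)) := by
  set f : ℕ → ℝ := fun n : ℕ => Real.exp (-γ * n) * ∑ i ∈ Finset.Icc 1 n, (i : ℝ) ^ (2 * p)
    with hf
  set a : ℝ := 2 * p + 1 with ha_def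
  have ha : 0 < a := by positivity
  set C : ℝ := ((4 * p + 2) / (Real.exp 1 * γ)) ^ a with hC_def
  have hC0 : 0 ≤ C := by positivity
  set r : ℝ := Real.exp (-(γ / 2)) with hr_def
  have hr0 : 0 ≤ r := (exp_pos _).le
  have hr1 : r < 1 := exp_lt_one_iff.2 (by linarith)
  -- pointwise bound `f n ≤ C * r ^ n`
  have hf_nonneg : ∀ n, 0 ≤ f n := by
    intro n
    exact mul_nonneg (exp_pos _).le (Finset.sum_nonneg fun i _ => rpow_nonneg (by positivity) _)
  have hfle : ∀ n : ℕ, f n ≤ C * r ^ n := by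
    intro n
    rcases Nat.eq_zero_or_pos n with hn | hn
    · subst hn
      have h0 : f 0 = 0 := by simp [hf]
      rw [h0]
      positivity
    · -- inner sum bound
      have hinner : ∑ i ∈ Finset.Icc 1 n, (i : ℝ) ^ (2 * p) ≤ (n : ℝ) ^ a := by
        have h1 : ∑ i ∈ Finset.Icc 1 n, (i : ℝ) ^ (2 * p)
            ≤ ∑ _i ∈ Finset.Icc 1 n, (n : ℝ) ^ (2 * p) := by
          refine Finset.sum_le_sum fun i hi => ?_
          have : (i : ℝ) ≤ n := Nat.cast_le.2 (Finset.mem_Icc.1 hi).2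
          exact Real.rpow_le_rpow (by positivity) this (by positivity)
        have h2 : ∑ _i ∈ Finset.Icc 1 n, (n : ℝ) ^ (2 * p) = (n : ℝ) * (n : ℝ) ^ (2 * p) := by
          rw [Finset.sum_const, Nat.card_Icc]
          simp [nsmul_eq_mul]
        have hn0 : (0 : ℝ) < n := by exact_mod_cast hn
        have h3 : (n : ℝ) * (n : ℝ) ^ (2 * p) = (n : ℝ) ^ a := by
          rw [ha_def, Real.rpow_add hn0, Real.rpow_one]; ring
        calc ∑ i ∈ Finset.Icc 1 n, (i : ℝ) ^ (2 * p) ≤ _ := h1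
          _ = (n : ℝ) * (n : ℝ) ^ (2 * p) := h2
          _ = (n : ℝ) ^ a := h3
      have hkey : (n : ℝ) ^ a ≤ C * Real.exp (γ / 2 * n) := by
        have := rpow_le_exp_aux (x := (n : ℝ)) (a := a) (b := γ / 2)
          (Nat.cast_nonneg n) ha (by linarith)
        have heq : (a / (Real.exp 1 * (γ / 2))) ^ a = C := by
          rw [hC_def]
          congr 1
          rw [ha_def]
          field_simp
          ring
        rwa [heq] at this
      calc f n ≤ Real.exp (-γ * n) * (n : ℝ) ^ a := by
            exact mul_le_mul_of_nonneg_left hinner (exp_pos _).le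
        _ ≤ Real.exp (-γ * n) * (C * Real.exp (γ / 2 * n)) :=
            mul_le_mul_of_nonneg_left hkey (exp_pos _).le
        _ = C * Real.exp (-(γ / 2) * n) := by
            rw [show Real.exp (-γ * n) * (C * Real.exp (γ / 2 * n))
                = C * (Real.exp (-γ * n) * Real.exp (γ / 2 * n)) by ring, ← Real.exp_add]
            ring_nf
        _ = C * r ^ n := by
            rw [hr_def, ← Real.exp_nat_mul]; ring_nf
  have hgeo : Summable fun n : ℕ => r ^ n := summable_geometric_of_lt_one hr0 hr1
  have hsum : Summable f :=
    Summable.of_nonneg_of_le hf_nonneg hfle (hgeo.mul_left C)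
  refine ⟨hsum, ?_⟩
  have hf0 : f 0 = 0 := by
    simp [hf]
  -- sum over shifted indices
  have hshift : ∑' n : ℕ, f n = ∑' n : ℕ, f (n + 1) := by
    rw [Summable.tsum_eq_zero_add hsum, hf0, zero_add]
  have hbound2 : ∑' n : ℕ, f (n + 1) ≤ (C * r) * (1 - r)⁻¹ := by
    have hsum' : Summable fun n : ℕ => f (n + 1) := (summable_nat_add_iff 1).2 hsum
    have h1 : ∑' n : ℕ, f (n + 1) ≤ ∑' n : ℕ, (C * r) * r ^ n := by
      refine Summable.tsum_le_tsum (fun n => ?_) hsum' (hgeo.mul_left _)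
      calc f (n + 1) ≤ C * r ^ (n + 1) := hfle (n + 1)
        _ = C * r * r ^ n := by rw [pow_succ]; ring
    rw [tsum_mul_left, tsum_geometric_of_lt_one hr0 hr1] at h1
    exact h1
  have hE : 1 < Real.exp (γ / 2) := one_lt_exp_iff.2 (by linarith)
  have hr_eq : (C * r) * (1 - r)⁻¹ = C / (Real.exp (γ / 2) - 1) := by
    have hr_inv : r = (Real.exp (γ / 2))⁻¹ := by
      rw [hr_def, Real.exp_neg]
    rw [hr_inv]
    have hE0 : Real.exp (γ / 2) ≠ 0 := (exp_pos _).ne'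
    have hE1 : Real.exp (γ / 2) - 1 ≠ 0 := by linarith
    field_simp
  -- final numeric inequality
  have hnum : (4 * p + 2) ^ a ≤ 4 * (8 * p + 4) ^ (2 * p) := by
    have h42 : (0:ℝ) < 4 * p + 2 := by linarith
    have hsplit : (4 * p + 2) ^ a = (4 * p + 2) ^ (2 * p) * (4 * p + 2) := by
      rw [ha_def, Real.rpow_add h42, Real.rpow_one]
    have hmul : ((8:ℝ) * p + 4) ^ (2 * p) = 2 ^ (2 * p) * (4 * p + 2) ^ (2 * p) := by
      rw [← Real.mul_rpow (by norm_num) h42.le]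
      congr 1
      ring
    have h2p : (1:ℝ) + p ≤ (2:ℝ) ^ (2 * p) := by
      rw [Real.rpow_def_of_pos (by norm_num : (0:ℝ) < 2)]
      have hlog : (0.6931471803 : ℝ) < Real.log 2 := Real.log_two_gt_d9
      have := Real.add_one_le_exp (Real.log 2 * (2 * p))
      nlinarith [mul_nonneg hp (by linarith : (0:ℝ) ≤ 2 * Real.log 2 - 1)]
    have hpow_nonneg : (0:ℝ) ≤ (4 * p + 2) ^ (2 * p) := by positivity
    rw [hsplit, hmul]
    nlinarith
  have hC_eq : C = (4 * p + 2) ^ a / (Real.exp 1 * γ) ^ a := by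
    rw [hC_def, Real.div_rpow (by linarith) (by positivity)]
  have hden : (0:ℝ) < (Real.exp 1 * γ) ^ a := by positivity
  have hfinal : C / (Real.exp (γ / 2) - 1) ≤
      4 * (8 * p + 4) ^ (2 * p) / ((Real.exp 1 * γ) ^ a * (Real.exp (γ / 2) - 1)) := by
    rw [hC_eq, ← div_div]
    have h1 : (4 * p + 2) ^ a / (Real.exp 1 * γ) ^ a
        ≤ 4 * (8 * p + 4) ^ (2 * p) / (Real.exp 1 * γ) ^ a := by
      gcongr
    exact (div_le_div_iff_of_pos_right (by linarith : (0:ℝ) < Real.exp (γ / 2) - 1)).2 h1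
  calc ∑' n : ℕ, f n = ∑' n : ℕ, f (n + 1) := hshift
    _ ≤ (C * r) * (1 - r)⁻¹ := hbound2
    _ = C / (Real.exp (γ / 2) - 1) := hr_eq
    _ ≤ _ := hfinal
end
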